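/- The plane curve germ at the origin defined by x(z² + x) = t·z³ in coordinates (x,z) has Milnor number 2 (type A₂) when t ≠ 0, and Milnor number 3 (type A₃) when t = 0. Hence the jump in Milnor number at t = 0 equals 1. -/

import Mathlib

section
open MvPolynomial

/-- The Milnor number of an isolated plane curve singularity germ `g` at the origin:
the dimension over `ℂ` of the quotient of the formal power series ring `ℂ[[x,z]]`
(playing the role of the local ring `ℂ{x,z}`) by the Jacobian ideal `(∂g/∂x, ∂g/∂z)`. -/
noncomputable def milnor (g : MvPolynomial (Fin 2) ℂ) : ℕ :=
  Module.finrank ℂ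
    ((MvPowerSeries (Fin 2) ℂ) ⧸
      Ideal.span {(↑(pderiv 0 g) : MvPowerSeries (Fin 2) ℂ),
                  (↑(pderiv 1 g) : MvPowerSeries (Fin 2) ℂ)})

end

namespace Stmt5Aux

open MvPowerSeries

abbrev R2 := MvPowerSeries (Fin 2) ℂ

noncomputable def e (a b : ℕ) : Fin 2 →₀ ℕ := Finsupp.single 0 a + Finsupp.single 1 b

@[simp] lemma e_apply0 (a b : ℕ) : e a b 0 = a := by
  simp [e, Finsupp.single_apply]

@[simp] lemma e_apply1 (a b : ℕ) : e a b 1 = b := by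
  simp [e, Finsupp.single_apply]

lemma eq_e (d : Fin 2 →₀ ℕ) : d = e (d 0) (d 1) := by
  ext i; fin_cases i <;> simp

lemma single0 (a : ℕ) : Finsupp.single (0 : Fin 2) a = e a 0 := by
  simp [e]

lemma single1 (b : ℕ) : Finsupp.single (1 : Fin 2) b = e 0 b := by
  simp [e]

lemma e_le {a b a' b' : ℕ} : e a b ≤ e a' b' ↔ a ≤ a' ∧ b ≤ b' := by
  rw [Finsupp.le_def]
  constructor
  · intro h; exact ⟨by simpa using h 0, by simpa using h 1⟩
  · rintro ⟨h1, h2⟩ i; fin_cases i <;> simpa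

lemma e_sub (a b a' b' : ℕ) : e a b - e a' b' = e (a - a') (b - b') := by
  ext i; fin_cases i <;> simp [Finsupp.tsub_apply]

lemma coeff_Xpow_mul (s : Fin 2) (k : ℕ) (φ : R2) (d : Fin 2 →₀ ℕ) :
    coeff d ((X s) ^ k * φ) =
      if Finsupp.single s k ≤ d then coeff (d - Finsupp.single s k) φ else 0 := by
  rw [X_pow_eq, coeff_monomial_mul]
  simp

lemma coeff_X0_mul (φ : R2) (a b : ℕ) :
    coeff (e a b) ((X 0 : R2) * φ) = if 1 ≤ a then coeff (e (a - 1) b) φ else 0 := by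
  rw [← pow_one (X 0 : R2), coeff_Xpow_mul, single0, e_sub]
  simp [e_le]

lemma coeff_X1pow_mul (k : ℕ) (φ : R2) (a b : ℕ) :
    coeff (e a b) ((X 1 : R2) ^ k * φ) = if k ≤ b then coeff (e a (b - k)) φ else 0 := by
  rw [coeff_Xpow_mul, single1, e_sub]
  simp [e_le]

noncomputable def G : R2 := (X 1) ^ 2 + 2 * X 0

lemma coeff_G_mul (φ : R2) (a b : ℕ) :
    coeff (e a b) (G * φ) =
      (if 2 ≤ b then coeff (e a (b - 2)) φ else 0)
        + 2 * (if 1 ≤ a then coeff (e (a - 1) b) φ else 0) := by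
  have h2 : (2 : R2) * X 0 * φ = X 0 * φ + X 0 * φ := by ring
  rw [G, add_mul, map_add, coeff_X1pow_mul, h2, map_add, coeff_X0_mul]
  ring

noncomputable def cq (f : R2) : ℕ → ℕ → ℂ
  | a, b =>
    (coeff (e (a + 1) b) f - (if h : 2 ≤ b then cq f (a + 1) (b - 2) else 0)) / 2
  termination_by a b => b
  decreasing_by omega

lemma cq_def (f : R2) (a b : ℕ) :
    cq f a b = (coeff (e (a + 1) b) f - (if 2 ≤ b then cq f (a + 1) (b - 2) else 0)) / 2 := by
  rw [cq]; rw [dite_eq_ite]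

noncomputable def Qs (f : R2) : R2 := fun d => cq f (d 0) (d 1)

lemma coeff_Qs (f : R2) (a b : ℕ) : coeff (e a b) (Qs f) = cq f a b := by
  rw [coeff_apply]; show cq f (e a b 0) (e a b 1) = _; simp

lemma coeff_G_mul_Qs (f : R2) (a b : ℕ) (ha : 1 ≤ a) :
    coeff (e a b) (G * Qs f) = coeff (e a b) f := by
  obtain ⟨a, rfl⟩ : ∃ a', a = a' + 1 := ⟨a - 1, by omega⟩
  rw [coeff_G_mul]
  simp only [Nat.le_refl, if_true, Nat.add_sub_cancel, le_add_iff_nonneg_left, zero_le,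
    coeff_Qs]
  rw [cq_def f a b]
  ring

noncomputable def rc (f : R2) (b : ℕ) : ℂ :=
  coeff (e 0 b) f - (if 2 ≤ b then cq f 0 (b - 2) else 0)

lemma rc_eq (f : R2) (b : ℕ) : rc f b = coeff (e 0 b) (f - G * Qs f) := by
  rw [map_sub, coeff_G_mul, rc]
  simp [coeff_Qs]

lemma cq_add (f g : R2) : ∀ b a, cq (f + g) a b = cq f a b + cq g a b := by
  intro b
  induction b using Nat.strong_induction_on with
  | _ b ih =>
    intro a
    rw [cq_def (f + g) a b, cq_def f a b, cq_def g a b, map_add]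
    split_ifs with h
    · rw [ih (b - 2) (by omega)]; ring
    · ring

lemma cq_smul (c : ℂ) (f : R2) : ∀ b a, cq (c • f) a b = c * cq f a b := by
  intro b
  induction b using Nat.strong_induction_on with
  | _ b ih =>
    intro a
    rw [cq_def (c • f) a b, cq_def f a b, map_smul, smul_eq_mul]
    split_ifs with h
    · rw [ih (b - 2) (by omega)]; ring
    · ring

lemma rc_add (f g : R2) (b : ℕ) : rc (f + g) b = rc f b + rc g b := by
  rw [rc, rc, rc, map_add, cq_add]
  split_ifs with h <;> ring

lemma rc_smul (c : ℂ) (f : R2) (b : ℕ) : rc (c • f) b = c * rc f b := by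
  rw [rc, rc, map_smul, smul_eq_mul, cq_smul]
  split_ifs with h <;> ring

lemma cq_eq_zero (f : R2) : ∀ b a,
    (∀ a' b', 2 * a' + b' = 2 * a + b + 2 → a + 1 ≤ a' → coeff (e a' b') f = 0) →
    cq f a b = 0 := by
  intro b
  induction b using Nat.strong_induction_on with
  | _ b ih =>
    intro a hf
    rw [cq_def]
    rw [hf (a + 1) b (by omega) (by omega)]
    split_ifs with h
    · rw [ih (b - 2) (by omega) (a + 1) (fun a' b' h1 h2 => hf a' b' (by omega) (by omega))]
      ring
    · ring

lemma Gmul_zonly (u : R2) (h : ∀ a b, coeff (e (a + 1) b) (G * u) = 0) : u = 0 := by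
  have key : ∀ b a, coeff (e a b) u = 0 := by
    intro b
    induction b using Nat.strong_induction_on with
    | _ b ih =>
      intro a
      have h' := h a b
      rw [coeff_G_mul] at h'
      simp only [Nat.add_sub_cancel, le_add_iff_nonneg_left, zero_le, if_true] at h'
      rcases le_or_gt 2 b with hb | hb
      · rw [if_pos hb, ih (b - 2) (by omega) (a + 1)] at h'
        have := h'
        field_simp at this
        linear_combination this / 2
      · rw [if_neg (by omega)] at h'
        have := h'
        field_simp at this
        linear_combination this / 2
  ext d
  rw [map_zero, eq_e d, key]

lemma Qs_G_mul (g : R2) : Qs (G * g) = g := by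
  have key : ∀ a b, coeff (e (a + 1) b) (G * (g - Qs (G * g))) = 0 := by
    intro a b
    rw [mul_sub, map_sub, coeff_G_mul_Qs _ _ _ (by omega), sub_self]
  have := Gmul_zonly _ key
  rw [sub_eq_zero] at this
  exact this.symm

lemma rc_G_mul (g : R2) (b : ℕ) : rc (G * g) b = 0 := by
  rw [rc_eq, Qs_G_mul, sub_self, map_zero]

lemma rc_X1pow_mul (h : R2) (k b : ℕ) (hb : b < k) : rc ((X 1 : R2) ^ k * h) b = 0 := by
  rw [rc, coeff_X1pow_mul, if_neg (by omega)]
  rw [zero_sub, neg_eq_zero]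
  split_ifs with h2
  · apply cq_eq_zero
    intro a' b' h1 h2'
    rw [coeff_X1pow_mul, if_neg (by omega)]
  · rfl
noncomputable def Jk (k : ℕ) : Ideal R2 := Ideal.span {G, (X 1 : R2) ^ k}

noncomputable def Sr (k : ℕ) (f : R2) : R2 :=
  fun d => if d 0 = 0 then coeff (e 0 (d 1 + k)) (f - G * Qs f) else 0

lemma coeff_Sr (k : ℕ) (f : R2) (a b : ℕ) :
    coeff (e a b) (Sr k f) =
      if a = 0 then coeff (e 0 (b + k)) (f - G * Qs f) else 0 := by
  rw [coeff_apply]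
  show (if e a b 0 = 0 then coeff (e 0 (e a b 1 + k)) (f - G * Qs f) else 0) = _
  simp

lemma decomp (k : ℕ) (f : R2) (hb : ∀ b < k, rc f b = 0) :
    Qs f * G + Sr k f * (X 1 : R2) ^ k = f := by
  ext d
  rw [eq_e d]
  generalize d 0 = a
  generalize d 1 = b
  rw [map_add, mul_comm (Qs f) G, mul_comm (Sr k f) _, coeff_X1pow_mul]
  rcases Nat.eq_zero_or_pos a with rfl | ha
  · have h1 : coeff (e 0 b) (G * Qs f) = coeff (e 0 b) f - rc f b := by
      rw [rc_eq, map_sub]; ring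
    rcases le_or_gt k b with hk | hk
    · rw [if_pos hk, coeff_Sr, if_pos rfl, Nat.sub_add_cancel hk, map_sub, h1]
      ring
    · rw [if_neg (by omega), h1, hb b hk]
      ring
  · have h1 : coeff (e a b) (G * Qs f) = coeff (e a b) f := coeff_G_mul_Qs f a b ha
    rw [h1]
    split_ifs with hk
    · rw [coeff_Sr, if_neg (by omega)]; ring
    · ring

noncomputable def Lm (k : ℕ) : R2 →ₗ[ℂ] (Fin k → ℂ) where
  toFun f i := rc f i
  map_add' f g := funext fun i => rc_add f g i
  map_smul' c f := funext fun i => rc_smul c f i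

lemma ker_Lm (k : ℕ) : LinearMap.ker (Lm k) = (Jk k).restrictScalars ℂ := by
  ext f
  simp only [LinearMap.mem_ker, Submodule.restrictScalars_mem]
  constructor
  · intro hf
    have hb : ∀ b < k, rc f b = 0 := by
      intro b hbk
      have := congrFun hf ⟨b, hbk⟩
      simpa [Lm] using this
    exact Ideal.mem_span_pair.mpr ⟨Qs f, Sr k f, decomp k f hb⟩
  · intro hf
    obtain ⟨p, q, hpq⟩ := Ideal.mem_span_pair.mp hf
    funext i
    show rc f i = 0
    rw [← hpq, mul_comm p G, mul_comm q _, rc_add, rc_G_mul, rc_X1pow_mul q k i i.isLt]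
    ring

lemma Lm_surj (k : ℕ) : Function.Surjective (Lm k) := by
  intro v
  refine ⟨fun d => if h : d 0 = 0 ∧ d 1 < k then v ⟨d 1, h.2⟩ else 0, ?_⟩
  set f : R2 := fun d => if h : d 0 = 0 ∧ d 1 < k then v ⟨d 1, h.2⟩ else 0 with hfdef
  have hcoeff : ∀ a b, coeff (e a b) f =
      if h : a = 0 ∧ b < k then v ⟨b, h.2⟩ else 0 := by
    intro a b
    rw [coeff_apply, hfdef]
    show (if h : e a b 0 = 0 ∧ e a b 1 < k then v ⟨e a b 1, h.2⟩ else 0) = _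
    simp
  funext i
  show rc f i = v i
  rw [rc, hcoeff, dif_pos ⟨rfl, i.isLt⟩]
  have hcq : (if 2 ≤ (i : ℕ) then cq f 0 ((i : ℕ) - 2) else 0) = 0 := by
    split_ifs with h2
    · apply cq_eq_zero
      intro a' b' h1 h2'
      rw [hcoeff, dif_neg (by omega)]
    · rfl
  rw [hcq]
  simp
lemma finrank_quot (k : ℕ) : Module.finrank ℂ (R2 ⧸ Jk k) = k := by
  have e1 : (R2 ⧸ (Jk k).restrictScalars ℂ) ≃ₗ[ℂ] (Fin k → ℂ) :=
    (Submodule.quotEquivOfEq _ _ (ker_Lm k).symm).trans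
      ((Lm k).quotKerEquivOfSurjective (Lm_surj k))
  have e2 : (R2 ⧸ (Jk k).restrictScalars ℂ) ≃ₗ[ℂ] (R2 ⧸ Jk k) :=
    Submodule.Quotient.restrictScalarsEquiv ℂ (Jk k)
  rw [← e2.finrank_eq, e1.finrank_eq, Module.finrank_fin_fun]

lemma pd0 (t : ℂ) :
    MvPolynomial.pderiv 0 (MvPolynomial.X 0 * ((MvPolynomial.X 1) ^ 2 + MvPolynomial.X 0)
        - MvPolynomial.C t * (MvPolynomial.X 1) ^ 3 : MvPolynomial (Fin 2) ℂ)
      = (MvPolynomial.X 1) ^ 2 + 2 * MvPolynomial.X 0 := by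
  simp [MvPolynomial.pderiv_mul, MvPolynomial.pderiv_pow, MvPolynomial.pderiv_X_self,
    MvPolynomial.pderiv_X_of_ne (show (1 : Fin 2) ≠ 0 by decide),
    MvPolynomial.pderiv_C]
  ring

lemma pd1 (t : ℂ) :
    MvPolynomial.pderiv 1 (MvPolynomial.X 0 * ((MvPolynomial.X 1) ^ 2 + MvPolynomial.X 0)
        - MvPolynomial.C t * (MvPolynomial.X 1) ^ 3 : MvPolynomial (Fin 2) ℂ)
      = 2 * MvPolynomial.X 0 * MvPolynomial.X 1
        - 3 * MvPolynomial.C t * (MvPolynomial.X 1) ^ 2 := by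
  simp [MvPolynomial.pderiv_mul, MvPolynomial.pderiv_pow, MvPolynomial.pderiv_X_self,
    MvPolynomial.pderiv_X_of_ne (show (0 : Fin 2) ≠ 1 by decide),
    MvPolynomial.pderiv_C]
  ring

lemma cast0 (t : ℂ) :
    ((MvPolynomial.pderiv 0 (MvPolynomial.X 0 * ((MvPolynomial.X 1) ^ 2 + MvPolynomial.X 0)
        - MvPolynomial.C t * (MvPolynomial.X 1) ^ 3 : MvPolynomial (Fin 2) ℂ) :
        MvPolynomial (Fin 2) ℂ) : R2) = G := by
  rw [pd0, G, ← MvPolynomial.coeToMvPowerSeries.ringHom_apply]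
  simp only [map_add, map_mul, map_pow, map_ofNat,
    MvPolynomial.coeToMvPowerSeries.ringHom_apply, MvPolynomial.coe_X]

lemma cast1 (t : ℂ) :
    ((MvPolynomial.pderiv 1 (MvPolynomial.X 0 * ((MvPolynomial.X 1) ^ 2 + MvPolynomial.X 0)
        - MvPolynomial.C t * (MvPolynomial.X 1) ^ 3 : MvPolynomial (Fin 2) ℂ) :
        MvPolynomial (Fin 2) ℂ) : R2) =
      2 * X 0 * X 1 - 3 * MvPowerSeries.C t * (X 1) ^ 2 := by
  rw [pd1, ← MvPolynomial.coeToMvPowerSeries.ringHom_apply]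
  simp only [map_sub, map_add, map_mul, map_pow, map_ofNat,
    MvPolynomial.coeToMvPowerSeries.ringHom_apply, MvPolynomial.coe_X, MvPolynomial.coe_C]

lemma spanA (t : ℂ) (ht : t ≠ 0) :
    Ideal.span {G, 2 * (X 0 : R2) * X 1 - 3 * MvPowerSeries.C t * (X 1) ^ 2}
      = Jk 2 := by
  set Ct : R2 := MvPowerSeries.C t with hCt
  set D : R2 := 2 * (X 0 : R2) * X 1 - 3 * Ct * (X 1) ^ 2 with hD
  apply le_antisymm
  · rw [Ideal.span_le]
    intro x hx
    simp only [Set.mem_insert_iff, Set.mem_singleton_iff] at hx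
    rcases hx with rfl | rfl
    · exact Ideal.subset_span (by simp)
    · exact Ideal.mem_span_pair.mpr ⟨X 1, -(X 1) - 3 * Ct, by rw [G]; ring⟩
  · rw [Jk, Ideal.span_le]
    intro x hx
    simp only [Set.mem_insert_iff, Set.mem_singleton_iff] at hx
    rcases hx with rfl | rfl
    · exact Ideal.subset_span (by simp)
    · have hu : IsUnit ((X 1 : R2) + 3 * Ct) := by
        rw [MvPowerSeries.isUnit_iff_constantCoeff]
        simp only [map_add, map_mul, constantCoeff_X, hCt, MvPowerSeries.constantCoeff_C,
          zero_add, map_ofNat]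
        exact isUnit_iff_ne_zero.mpr (by simpa using ht)
      obtain ⟨w, hw⟩ := hu
      have hmem : ((X 1 : R2) + 3 * Ct) * (X 1) ^ 2 ∈ Ideal.span {G, D} :=
        Ideal.mem_span_pair.mpr ⟨X 1, -1, by rw [G, hD]; ring⟩
      have hx1 : ((w⁻¹ : R2ˣ) : R2) * (((X 1 : R2) + 3 * Ct) * (X 1) ^ 2) = (X 1) ^ 2 := by
        rw [← hw, ← mul_assoc, Units.inv_mul, one_mul]
      rw [← hx1]
      exact Ideal.mul_mem_left _ _ hmem

lemma spanB : Ideal.span {G, 2 * (X 0 : R2) * X 1} = Jk 3 := by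
  apply le_antisymm
  · rw [Ideal.span_le]
    intro x hx
    simp only [Set.mem_insert_iff, Set.mem_singleton_iff] at hx
    rcases hx with rfl | rfl
    · exact Ideal.subset_span (by simp)
    · exact Ideal.mem_span_pair.mpr ⟨X 1, -1, by rw [G]; ring⟩
  · rw [Jk, Ideal.span_le]
    intro x hx
    simp only [Set.mem_insert_iff, Set.mem_singleton_iff] at hx
    rcases hx with rfl | rfl
    · exact Ideal.subset_span (by simp)
    · exact Ideal.mem_span_pair.mpr ⟨X 1, -1, by rw [G]; ring⟩

lemma milnor_congr {I J : Ideal R2} (h : I = J) :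
    Module.finrank ℂ (R2 ⧸ I) = Module.finrank ℂ (R2 ⧸ J) := by rw [h]

end Stmt5Aux

open MvPolynomial

/-- the plane curve germ `x(z² + x) = t·z³` at the origin has Milnor
number 2 (type A₂) for t ≠ 0 and Milnor number 3 (type A₃) for t = 0; hence the jump
at t = 0 equals 1. Here `X 0 = x`, `X 1 = z`. -/
theorem stmt_5 :
    (∀ t : ℂ, t ≠ 0 →
      milnor (X 0 * ((X 1) ^ 2 + X 0) - C t * (X 1) ^ 3) = 2) ∧
    milnor (X 0 * ((X 1) ^ 2 + X 0)) = 3 ∧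
    (∀ t : ℂ, t ≠ 0 →
      milnor (X 0 * ((X 1) ^ 2 + X 0)) -
        milnor (X 0 * ((X 1) ^ 2 + X 0) - C t * (X 1) ^ 3) = 1) := by
  have h2 : ∀ t : ℂ, t ≠ 0 →
      milnor (X 0 * ((X 1) ^ 2 + X 0) - C t * (X 1) ^ 3) = 2 := by
    intro t ht
    unfold milnor
    have hI : Ideal.span
        {(↑(pderiv 0 (X 0 * ((X 1) ^ 2 + X 0) - C t * (X 1) ^ 3 : MvPolynomial (Fin 2) ℂ)) : MvPowerSeries (Fin 2) ℂ),
         (↑(pderiv 1 (X 0 * ((X 1) ^ 2 + X 0) - C t * (X 1) ^ 3 : MvPolynomial (Fin 2) ℂ)) : MvPowerSeries (Fin 2) ℂ)}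
        = Stmt5Aux.Jk 2 := by
      rw [Stmt5Aux.cast0 t, Stmt5Aux.cast1 t]
      exact Stmt5Aux.spanA t ht
    rw [Stmt5Aux.milnor_congr hI, Stmt5Aux.finrank_quot]
  have h3 : milnor (X 0 * ((X 1) ^ 2 + X 0)) = 3 := by
    have hg : (X 0 * ((X 1) ^ 2 + X 0) : MvPolynomial (Fin 2) ℂ)
        = X 0 * ((X 1) ^ 2 + X 0) - C (0 : ℂ) * (X 1) ^ 3 := by simp
    rw [hg]
    unfold milnor
    have hset : (2 * (MvPowerSeries.X 0 : Stmt5Aux.R2) * MvPowerSeries.X 1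
          - 3 * MvPowerSeries.C (0 : ℂ) * (MvPowerSeries.X 1) ^ 2)
        = 2 * MvPowerSeries.X 0 * MvPowerSeries.X 1 := by simp
    have hI : Ideal.span
        {(↑(pderiv 0 (X 0 * ((X 1) ^ 2 + X 0) - C (0:ℂ) * (X 1) ^ 3 : MvPolynomial (Fin 2) ℂ)) : MvPowerSeries (Fin 2) ℂ),
         (↑(pderiv 1 (X 0 * ((X 1) ^ 2 + X 0) - C (0:ℂ) * (X 1) ^ 3 : MvPolynomial (Fin 2) ℂ)) : MvPowerSeries (Fin 2) ℂ)}
        = Stmt5Aux.Jk 3 := by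
      rw [Stmt5Aux.cast0 0, Stmt5Aux.cast1 0, hset]
      exact Stmt5Aux.spanB
    rw [Stmt5Aux.milnor_congr hI, Stmt5Aux.finrank_quot]
  exact ⟨h2, h3, fun t ht => by rw [h2 t ht, h3]⟩
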